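/- For every m ≥ 2 and every odd n ≥ 3, P_DP(C_n,m) = (m-1)^n - (m-1) and P*_DP(C_n,m) = (m-1)^n + 1. -/

import Mathlib

/-- A finite-multiplicity loopless multigraph on vertex set `V`:
`mult u v` is the number of parallel edges joining `u` and `v`. -/
structure Multigraph (V : Type) where
  mult : V → V → ℕ
  symm : ∀ u v, mult u v = mult v u
  loopless : ∀ v, mult v v = 0

/-- A full `m`-fold cover of a multigraph `G`.  The list of a vertex `u` is
identified with `{u} × Fin m`; for each ordered pair `(u,v)` and each edge index
`i` (only indices `i < G.mult u v` are relevant) the corresponding perfect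
matching between the two lists is recorded as a permutation of `Fin m`, the two
orientations of an edge giving inverse permutations. -/
structure FullCover {V : Type} (G : Multigraph V) (m : ℕ) where
  perm : V → V → ℕ → (Fin m ≃ Fin m)
  compat : ∀ u v i, perm v u i = (perm u v i).symm

/-- `f` (choosing one list element per vertex) is an `H`-coloring: it avoids all
cross edges of the cover. -/
def FullCover.IsColoring {V : Type} {G : Multigraph V} {m : ℕ}
    (c : FullCover G m) (f : V → Fin m) : Prop :=
  ∀ u v i, i < G.mult u v → (c.perm u v i) (f u) ≠ f v

/-- The number of `H`-colorings of `G` for the cover `c`. -/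
noncomputable def FullCover.numColorings {V : Type} {G : Multigraph V} {m : ℕ}
    (c : FullCover G m) : ℕ :=
  Nat.card {f : V → Fin m // c.IsColoring f}

/-- The DP color function: the minimum number of colorings over all full
`m`-fold covers. -/
noncomputable def Multigraph.PDP {V : Type} (G : Multigraph V) (m : ℕ) : ℕ :=
  sInf {n | ∃ c : FullCover G m, n = c.numColorings}

/-- The dual DP color function: the maximum number of colorings over all full
`m`-fold covers. -/
noncomputable def Multigraph.PDPdual {V : Type} (G : Multigraph V) (m : ℕ) : ℕ :=
  sSup {n | ∃ c : FullCover G m, n = c.numColorings}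

/-- The number of proper `m`-colorings of (the underlying graph of) `G`. -/
noncomputable def Multigraph.properCount {V : Type} (G : Multigraph V) (m : ℕ) : ℕ :=
  Nat.card {f : V → Fin m // ∀ u v, 0 < G.mult u v → f u ≠ f v}

/-- The cycle `C_n` on vertex set `Fin n`, as a multigraph: vertex `i` is joined
to vertex `i+1 (mod n)`.  In particular `C_2` consists of two vertices joined by
two parallel edges. -/
def cycleMultigraph (n : ℕ) : Multigraph (Fin n) where
  mult u v :=
    if u = v then 0
    else (Finset.univ.filter (fun i : Fin n =>
      (i = u ∧ (i.val + 1) % n = v.val) ∨ (i = v ∧ (i.val + 1) % n = u.val))).card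
  symm := by
    intro u v
    try dsimp only
    by_cases h : u = v
    · rw [if_pos h, if_pos h.symm]
    · rw [if_neg h, if_neg (Ne.symm h)]
      congr 1
      apply Finset.filter_congr
      intro i _
      constructor <;> (intro h'; tauto)
  loopless := by intro v; simp


open Finset

namespace DPCycle

variable {m : ℕ}

/-- pair (A k, B k): walk counts in K_m with twisted endpoints equal / unequal -/
def AB (m : ℕ) : ℕ → ℕ × ℕ
  | 0 => (1, 0)
  | k+1 => ((m-1) * (AB m k).2, (AB m k).1 + (m-2) * (AB m k).2)

/-- composition of σ (n-1) ∘ ... ∘ σ 0 -/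
def wcomp (σ : ℕ → Equiv.Perm (Fin m)) : ℕ → Equiv.Perm (Fin m)
  | 0 => 1
  | k+1 => σ k * wcomp σ k

/-- number of walks x_0 = a, ..., x_k = b with σ i x_i ≠ x_{i+1} -/
def Wcnt (σ : ℕ → Equiv.Perm (Fin m)) : ℕ → Fin m → Fin m → ℕ
  | 0, a, b => if a = b then 1 else 0
  | k+1, a, b => ∑ c ∈ univ.filter (fun c => σ k c ≠ b), Wcnt σ k a c

lemma sum_ite_eq_univ (A B : ℕ) (x : Fin m) :
    ∑ c : Fin m, (if x = c then A else B) = A + (m-1) * B := by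
  rw [Finset.sum_ite]
  have h1 : univ.filter (fun c : Fin m => x = c) = {x} := by
    ext c; simp [eq_comm]
  have h2 : (univ.filter (fun c : Fin m => ¬ x = c)).card = m - 1 := by
    rw [Finset.filter_not, Finset.card_sdiff_of_subset (by simp [h1])]
    simp [h1]
  simp [h1, h2, mul_comm]

lemma Wcnt_eq (hm : 2 ≤ m) (σ : ℕ → Equiv.Perm (Fin m)) (k : ℕ) (a : Fin m) :
    ∀ b, Wcnt σ k a b = if wcomp σ k a = b then (AB m k).1 else (AB m k).2 := by
  induction k with
  | zero => intro b; simp [Wcnt, wcomp, AB]; split_ifs <;> simp_all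
  | succ k ih =>
    intro b
    have hfil : univ.filter (fun c : Fin m => σ k c ≠ b) = univ.erase ((σ k)⁻¹ b) := by
      ext c
      simp only [Finset.mem_filter, Finset.mem_erase, Finset.mem_univ, and_true, true_and]
      constructor
      · intro h hc; exact h (by rw [hc]; simp)
      · intro h hc; exact h (by rw [← hc]; simp)
    have hWdef : Wcnt σ (k+1) a b = ∑ c ∈ univ.filter (fun c : Fin m => σ k c ≠ b),
        Wcnt σ k a c := rfl
    rw [hWdef, hfil]
    by_cases hx : wcomp σ k a = (σ k)⁻¹ b
    · have hcomp : wcomp σ (k+1) a = b := by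
        show (σ k * wcomp σ k) a = b
        simp [Equiv.Perm.mul_apply, hx]
      rw [if_pos hcomp]
      have : ∀ c ∈ univ.erase ((σ k)⁻¹ b), Wcnt σ k a c = (AB m k).2 := by
        intro c hc
        rw [ih c, if_neg]
        rw [hx]
        exact (Finset.mem_erase.mp hc).1.symm
      rw [Finset.sum_congr rfl this, Finset.sum_const, smul_eq_mul]
      have hcard : (univ.erase ((σ k)⁻¹ b)).card = m - 1 := by
        rw [Finset.card_erase_of_mem (Finset.mem_univ _)]
        simp
      rw [hcard]
      rfl
    · have hcomp : wcomp σ (k+1) a ≠ b := by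
        show (σ k * wcomp σ k) a ≠ b
        simp only [Equiv.Perm.mul_apply]
        intro h
        exact hx (by rw [← h]; simp)
      rw [if_neg hcomp]
      have key : Wcnt σ k a ((σ k)⁻¹ b) + ∑ c ∈ univ.erase ((σ k)⁻¹ b), Wcnt σ k a c
          = ∑ c : Fin m, Wcnt σ k a c :=
        Finset.add_sum_erase _ _ (Finset.mem_univ _)
      have htot : ∑ c : Fin m, Wcnt σ k a c = (AB m k).1 + (m-1) * (AB m k).2 := by
        rw [Finset.sum_congr rfl (fun c _ => ih c)]
        exact sum_ite_eq_univ _ _ _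
      have hterm : Wcnt σ k a ((σ k)⁻¹ b) = (AB m k).2 := by
        rw [ih, if_neg hx]
      rw [htot, hterm] at key
      have hm1 : m - 1 = (m - 2) + 1 := by omega
      rw [hm1] at key
      have key2 : (AB m k).2 + ∑ c ∈ univ.erase ((σ k)⁻¹ b), Wcnt σ k a c
          = (AB m k).2 + ((AB m k).1 + (m-2) * (AB m k).2) := by
        rw [key]; ring
      have := Nat.add_left_cancel key2
      rw [this]
      rfl


lemma AB_spec (hm : 2 ≤ m) : ∀ k,
    ((m:ℤ) * (AB m k).1 = ((m:ℤ)-1)^k + (-1)^k * ((m:ℤ)-1)) ∧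
    ((m:ℤ) * (AB m k).2 = ((m:ℤ)-1)^k - (-1)^k) := by
  have c1 : ((m-1 : ℕ) : ℤ) = (m:ℤ) - 1 := by omega
  have c2 : ((m-2 : ℕ) : ℤ) = (m:ℤ) - 2 := by omega
  intro k
  induction k with
  | zero => simp [AB]
  | succ k ih =>
    obtain ⟨ih1, ih2⟩ := ih
    constructor
    · show (m:ℤ) * ((m-1 : ℕ) * (AB m k).2 : ℕ) = _
      push_cast
      rw [c1]
      linear_combination ((m:ℤ)-1) * ih2
    · show (m:ℤ) * ((AB m k).1 + (m-2 : ℕ) * (AB m k).2 : ℕ) = _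
      push_cast
      rw [c2]
      linear_combination ih1 + ((m:ℤ)-2) * ih2

lemma card_fiber {γ : Type} [Finite γ] (P : γ → Prop) (π : γ → Fin m) :
    Nat.card {x // P x} = ∑ a : Fin m, Nat.card {x // P x ∧ π x = a} := by
  classical
  have e : {x // P x} ≃ Σ a : Fin m, {x // P x ∧ π x = a} :=
    (Equiv.sigmaFiberEquiv (fun s : {x // P x} => π s.1)).symm.trans
      (Equiv.sigmaCongrRight (fun a =>
        Equiv.subtypeSubtypeEquivSubtypeInter P (fun x => π x = a)))
  haveI := Fintype.ofFinite γ
  rw [Nat.card_congr e, Nat.card_eq_fintype_card, Fintype.card_sigma]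
  exact Finset.sum_congr rfl (fun a _ => (Nat.card_eq_fintype_card).symm)

lemma path_card (σ : ℕ → Equiv.Perm (Fin m)) :
    ∀ (k : ℕ) (a b : Fin m), Nat.card {g : Fin (k+1) → Fin m //
      g 0 = a ∧ g (Fin.last k) = b ∧ ∀ i : Fin k, σ i.val (g i.castSucc) ≠ g i.succ}
      = Wcnt σ k a b := by
  intro k
  induction k with
  | zero =>
    intro a b
    by_cases hab : a = b
    · subst hab
      have : Nat.card {g : Fin 1 → Fin m //
          g 0 = a ∧ g (Fin.last 0) = a ∧ ∀ i : Fin 0, σ i.val (g i.castSucc) ≠ g i.succ} = 1 := by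
        rw [Nat.card_eq_one_iff_unique]
        constructor
        · constructor
          rintro ⟨g, hg, -⟩ ⟨g', hg', -⟩
          apply Subtype.ext
          funext i
          have hi : i = 0 := Subsingleton.elim i 0
          subst hi
          show g 0 = g' 0
          rw [hg, hg']
        · exact ⟨⟨fun _ => a, rfl, rfl, fun i => i.elim0⟩⟩
      rw [this]
      simp [Wcnt]
    · have : IsEmpty {g : Fin 1 → Fin m //
          g 0 = a ∧ g (Fin.last 0) = b ∧ ∀ i : Fin 0, σ i.val (g i.castSucc) ≠ g i.succ} := by
        constructor
        rintro ⟨g, h0, hl, -⟩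
        exact hab (h0 ▸ hl ▸ rfl)
      rw [Nat.card_of_isEmpty]
      simp [Wcnt, hab]
  | succ k ih =>
    intro a b
    rw [card_fiber _ (fun g => g (Fin.castSucc (Fin.last k)))]
    have hW : Wcnt σ (k+1) a b
        = ∑ c : Fin m, if σ k c ≠ b then Wcnt σ k a c else 0 := by
      show (∑ c ∈ univ.filter (fun c => σ k c ≠ b), Wcnt σ k a c) = _
      rw [Finset.sum_filter]
    rw [hW]
    apply Finset.sum_congr rfl
    intro c _
    by_cases hq : σ k c ≠ b
    · rw [if_pos hq, ← ih a c]
      apply Nat.card_congr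
      refine ⟨fun g => ⟨Fin.init g.1, ?_, ?_, ?_⟩,
              fun g' => ⟨Fin.snoc g'.1 b, ⟨?_, ?_, ?_⟩, ?_⟩,
              fun g => ?_, fun g' => ?_⟩
      · show g.1 (Fin.castSucc 0) = a
        rw [Fin.castSucc_zero]; exact g.2.1.1
      · exact g.2.2
      · intro i
        have := g.2.1.2.2 i.castSucc
        rwa [Fin.succ_castSucc] at this
      · have h00 := @Fin.snoc_castSucc (k+1) (fun _ => Fin m) b g'.1 0
        rw [Fin.castSucc_zero] at h00
        rw [h00]; exact g'.2.1
      · exact @Fin.snoc_last (k+1) (fun _ => Fin m) b g'.1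
      · intro i
        refine Fin.lastCases ?_ ?_ i
        · rw [Fin.succ_last]
          simp only [Fin.snoc_castSucc, Fin.snoc_last, Fin.val_last]
          rw [g'.2.2.1]; exact hq
        · intro j
          rw [Fin.succ_castSucc]
          simp only [Fin.snoc_castSucc, Fin.coe_castSucc]
          exact g'.2.2.2 j
      · simp only [Fin.snoc_castSucc]; exact g'.2.2.1
      · have h := @Fin.snoc_init_self (k+1) (fun _ => Fin m) g.1
        rw [g.2.1.2.1] at h
        exact Subtype.ext h
      · exact Subtype.ext (@Fin.init_snoc (k+1) (fun _ => Fin m) b g'.1)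
    · rw [if_neg hq]
      push_neg at hq
      have : IsEmpty {g : Fin (k+1+1) → Fin m //
          (g 0 = a ∧ g (Fin.last (k+1)) = b ∧
            ∀ i : Fin (k+1), σ i.val (g i.castSucc) ≠ g i.succ) ∧
          g (Fin.castSucc (Fin.last k)) = c} := by
        constructor
        rintro ⟨g, ⟨h0, hl, hp⟩, hc⟩
        have := hp (Fin.last k)
        rw [Fin.succ_last] at this
        apply this
        rw [hc, hl, Fin.val_last, hq]
      rw [Nat.card_of_isEmpty]


def ext {k : ℕ} (σfn : Fin (k+1) → Equiv.Perm (Fin m)) : ℕ → Equiv.Perm (Fin m) :=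
  fun i => if h : i < k+1 then σfn ⟨i, h⟩ else 1

lemma castSucc_add_one {k : ℕ} (i : Fin k) : i.castSucc + (1 : Fin (k+1)) = i.succ := by
  have hk : 1 ≤ k := Nat.one_le_iff_ne_zero.mpr (by rintro rfl; exact i.elim0)
  apply Fin.ext
  have hi := i.isLt
  rw [Fin.val_add, Fin.val_one', Fin.coe_castSucc, Fin.val_succ,
    Nat.mod_eq_of_lt (by omega : (1:ℕ) < k+1), Nat.mod_eq_of_lt (by omega)]

lemma ext_eq {k : ℕ} (σfn : Fin (k+1) → Equiv.Perm (Fin m)) (i : Fin (k+1)) :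
    ext σfn i.val = σfn i := by
  unfold ext
  rw [dif_pos i.isLt]

lemma cyclic_iff {k : ℕ} (σfn : Fin (k+1) → Equiv.Perm (Fin m)) (f : Fin (k+1) → Fin m) :
    (∀ u : Fin (k+1), σfn u (f u) ≠ f (u + 1)) ↔
      ((∀ i : Fin k, ext σfn i.val (f i.castSucc) ≠ f i.succ) ∧
        ext σfn k (f (Fin.last k)) ≠ f 0) := by
  constructor
  · intro h
    constructor
    · intro i
      have h2 := h i.castSucc
      rw [castSucc_add_one] at h2
      rw [show ext σfn i.val = σfn i.castSucc from ext_eq σfn i.castSucc]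
      exact h2
    · have h2 := h (Fin.last k)
      rw [Fin.last_add_one] at h2
      rw [show ext σfn k = σfn (Fin.last k) from ext_eq σfn (Fin.last k)]
      exact h2
  · rintro ⟨hp, hw⟩ u
    refine Fin.lastCases ?_ ?_ u
    · rw [Fin.last_add_one]
      rw [← show ext σfn k = σfn (Fin.last k) from ext_eq σfn (Fin.last k)]
      exact hw
    · intro j
      rw [castSucc_add_one]
      rw [← show ext σfn j.val = σfn j.castSucc from ext_eq σfn j.castSucc]
      exact hp j

lemma cyclic_card {k : ℕ} (σfn : Fin (k+1) → Equiv.Perm (Fin m)) :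
    Nat.card {f : Fin (k+1) → Fin m // ∀ u, σfn u (f u) ≠ f (u + 1)}
      = ∑ a : Fin m, Wcnt (ext σfn) (k+1) a a := by
  rw [card_fiber _ (fun f => f 0)]
  apply Finset.sum_congr rfl
  intro a _
  have hW : Wcnt (ext σfn) (k+1) a a
      = ∑ c : Fin m, if ext σfn k c ≠ a then Wcnt (ext σfn) k a c else 0 := by
    show (∑ c ∈ univ.filter _, _) = _
    rw [Finset.sum_filter]
  rw [hW, card_fiber _ (fun f => f (Fin.last k))]
  apply Finset.sum_congr rfl
  intro c _
  by_cases hq : ext σfn k c ≠ a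
  · rw [if_pos hq, ← path_card (ext σfn) k a c]
    apply Nat.card_congr
    apply Equiv.subtypeEquivRight
    intro f
    constructor
    · rintro ⟨⟨hcyc, h0⟩, hl⟩
      obtain ⟨hp, hw⟩ := (cyclic_iff σfn f).mp hcyc
      exact ⟨h0, hl, hp⟩
    · rintro ⟨h0, hl, hp⟩
      refine ⟨⟨(cyclic_iff σfn f).mpr ⟨hp, ?_⟩, h0⟩, hl⟩
      rw [hl, h0]
      exact hq
  · rw [if_neg hq]
    push_neg at hq
    have : IsEmpty {f : Fin (k+1) → Fin m //
        ((∀ u, σfn u (f u) ≠ f (u + 1)) ∧ f 0 = a) ∧ f (Fin.last k) = c} := by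
      constructor
      rintro ⟨f, ⟨hcyc, h0⟩, hl⟩
      have hw := ((cyclic_iff σfn f).mp hcyc).2
      rw [hl, h0] at hw
      exact hw hq
    rw [Nat.card_of_isEmpty]

/-- number of fixed points -/
def fixc (τ : Equiv.Perm (Fin m)) : ℕ := (univ.filter (fun x => τ x = x)).card

lemma fixc_le (τ : Equiv.Perm (Fin m)) : fixc τ ≤ m := by
  have := Finset.card_filter_le (univ : Finset (Fin m)) (fun x => τ x = x)
  simpa [fixc] using this

lemma sum_W_diag (hm : 2 ≤ m) (σ : ℕ → Equiv.Perm (Fin m)) (j : ℕ) :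
    ∑ a : Fin m, Wcnt σ j a a
      = fixc (wcomp σ j) * (AB m j).1 + (m - fixc (wcomp σ j)) * (AB m j).2 := by
  rw [Finset.sum_congr rfl (fun a _ => Wcnt_eq hm σ j a a)]
  rw [Finset.sum_ite, Finset.sum_const, Finset.sum_const, smul_eq_mul, smul_eq_mul]
  have h2 : (univ.filter (fun a : Fin m => ¬ wcomp σ j a = a)).card
      = m - fixc (wcomp σ j) := by
    rw [Finset.filter_not, Finset.card_sdiff_of_subset (Finset.filter_subset _ _)]
    simp [fixc]
  rw [h2]
  rfl


lemma succ_mod_ne {n : ℕ} (hn : 3 ≤ n) (w : Fin n) : (w.val + 1) % n ≠ w.val := by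
  have h := w.isLt
  rcases Nat.lt_or_ge (w.val + 1) n with h1 | h1
  · rw [Nat.mod_eq_of_lt h1]; omega
  · have e : w.val + 1 = n := by omega
    rw [e, Nat.mod_self]; omega

lemma two_step_ne {n : ℕ} (hn : 3 ≤ n) (w : Fin n) : ((w.val + 1) % n + 1) % n ≠ w.val := by
  have h := w.isLt
  rcases Nat.lt_or_ge (w.val + 1) n with h1 | h1
  · rw [Nat.mod_eq_of_lt h1]
    rcases Nat.lt_or_ge (w.val + 2) n with h2 | h2
    · rw [Nat.mod_eq_of_lt (by omega)]; omega
    · have e : w.val + 1 + 1 = n := by omega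
      rw [e, Nat.mod_self]; omega
  · have e : w.val + 1 = n := by omega
    rw [e, Nat.mod_self, Nat.mod_eq_of_lt (by omega)]; omega

lemma val_add_one {k : ℕ} (h3 : 3 ≤ k+1) (w : Fin (k+1)) :
    ((w + 1 : Fin (k+1)) : ℕ) = (w.val + 1) % (k+1) := by
  rw [Fin.val_add, Fin.val_one', Nat.mod_eq_of_lt (show 1 < k+1 by omega)]

lemma eq_add_one_iff {k : ℕ} (h3 : 3 ≤ k+1) (w w' : Fin (k+1)) :
    w' = w + 1 ↔ (w.val + 1) % (k+1) = w'.val := by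
  rw [Fin.ext_iff, val_add_one h3, eq_comm]

lemma no_two_cycle {k : ℕ} (h3 : 3 ≤ k+1) {u v : Fin (k+1)}
    (h1 : v = u + 1) (h2 : u = v + 1) : False := by
  apply two_step_ne h3 u
  rw [(eq_add_one_iff h3 u v).mp h1]
  exact (eq_add_one_iff h3 v u).mp h2

lemma cycle_mult {k : ℕ} (h3 : 3 ≤ k+1) (u v : Fin (k+1)) :
    (cycleMultigraph (k+1)).mult u v = if v = u + 1 ∨ u = v + 1 then 1 else 0 := by
  show (if u = v then 0
    else (Finset.univ.filter (fun i : Fin (k+1) =>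
      (i = u ∧ (i.val + 1) % (k+1) = v.val) ∨ (i = v ∧ (i.val + 1) % (k+1) = u.val))).card) = _
  by_cases huv : u = v
  · subst huv
    rw [if_pos rfl, if_neg]
    rintro (h | h) <;> exact succ_mod_ne h3 u ((eq_add_one_iff h3 u u).mp h)
  · rw [if_neg huv]
    by_cases h1 : v = u + 1
    · have hno2 : ¬ u = v + 1 := fun h2 => no_two_cycle h3 h1 h2
      rw [if_pos (Or.inl h1)]
      have hfil : (Finset.univ.filter (fun i : Fin (k+1) =>
          (i = u ∧ (i.val + 1) % (k+1) = v.val) ∨ (i = v ∧ (i.val + 1) % (k+1) = u.val))) = {u} := by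
        ext i
        simp only [Finset.mem_filter, Finset.mem_univ, true_and, Finset.mem_singleton]
        constructor
        · rintro (⟨hi, h⟩ | ⟨hi, h⟩)
          · exact hi
          · exact absurd ((eq_add_one_iff h3 v u).mpr (hi ▸ h)) hno2
        · rintro hi
          exact Or.inl ⟨hi, by rw [hi]; exact (eq_add_one_iff h3 u v).mp h1⟩
      rw [hfil, Finset.card_singleton]
    · by_cases h2 : u = v + 1
      · rw [if_pos (Or.inr h2)]
        have hfil : (Finset.univ.filter (fun i : Fin (k+1) =>
            (i = u ∧ (i.val + 1) % (k+1) = v.val) ∨ (i = v ∧ (i.val + 1) % (k+1) = u.val))) = {v} := by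
          ext i
          simp only [Finset.mem_filter, Finset.mem_univ, true_and, Finset.mem_singleton]
          constructor
          · rintro (⟨hi, h⟩ | ⟨hi, h⟩)
            · exact absurd ((eq_add_one_iff h3 u v).mpr (hi ▸ h)) h1
            · exact hi
          · rintro hi
            exact Or.inr ⟨hi, by rw [hi]; exact (eq_add_one_iff h3 v u).mp h2⟩
        rw [hfil, Finset.card_singleton]
      · rw [if_neg (by tauto)]
        have hfil : (Finset.univ.filter (fun i : Fin (k+1) =>
            (i = u ∧ (i.val + 1) % (k+1) = v.val) ∨ (i = v ∧ (i.val + 1) % (k+1) = u.val))) = ∅ := by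
          ext i
          simp only [Finset.mem_filter, Finset.mem_univ, true_and, Finset.notMem_empty,
            iff_false]
          rintro (⟨hi, h⟩ | ⟨hi, h⟩)
          · exact h1 ((eq_add_one_iff h3 u v).mpr (hi ▸ h))
          · exact h2 ((eq_add_one_iff h3 v u).mpr (hi ▸ h))
        rw [hfil, Finset.card_empty]

lemma isColoring_iff {k : ℕ} (h3 : 3 ≤ k+1) (c : FullCover (cycleMultigraph (k+1)) m)
    (f : Fin (k+1) → Fin m) :
    c.IsColoring f ↔ ∀ u : Fin (k+1), c.perm u (u+1) 0 (f u) ≠ f (u+1) := by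
  constructor
  · intro h u
    apply h u (u+1) 0
    rw [cycle_mult h3, if_pos (Or.inl rfl)]
    omega
  · intro h u v i hi
    rw [cycle_mult h3] at hi
    by_cases hcase : v = u + 1 ∨ u = v + 1
    · rw [if_pos hcase] at hi
      have hi0 : i = 0 := by omega
      subst hi0
      rcases hcase with rfl | rfl
      · exact h u
      · rw [c.compat v (v+1) 0]
        intro heq
        exact h v (by rw [← heq, Equiv.apply_symm_apply])
    · rw [if_neg hcase] at hi; omega

lemma numColorings_eq {k : ℕ} (h3 : 3 ≤ k+1) (c : FullCover (cycleMultigraph (k+1)) m) :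
    c.numColorings
      = Nat.card {f : Fin (k+1) → Fin m // ∀ u, c.perm u (u+1) 0 (f u) ≠ f (u+1)} := by
  unfold FullCover.numColorings
  exact Nat.card_congr (Equiv.subtypeEquivRight (fun f => isColoring_iff h3 c f))

def coverOf {k : ℕ} (h3 : 3 ≤ k+1) (σfn : Fin (k+1) → Equiv.Perm (Fin m)) :
    FullCover (cycleMultigraph (k+1)) m where
  perm u v _ := if v = u + 1 then σfn u else if u = v + 1 then (σfn v).symm else 1
  compat := by
    intro u v i
    by_cases h1 : u = v + 1
    · have h2 : ¬ v = u + 1 := fun h2 => no_two_cycle h3 h2 h1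
      simp only [if_pos h1, if_neg h2, Equiv.symm_symm]
    · by_cases h2 : v = u + 1
      · simp only [if_pos h2, if_neg h1]
      · simp only [if_neg h1, if_neg h2]
        rfl

lemma coverOf_perm {k : ℕ} (h3 : 3 ≤ k+1) (σfn : Fin (k+1) → Equiv.Perm (Fin m)) (u : Fin (k+1)) :
    (coverOf h3 σfn).perm u (u+1) 0 = σfn u := if_pos rfl

lemma Ncyc_formula {k : ℕ} (hm : 2 ≤ m) (hodd : Odd (k+1))
    (σfn : Fin (k+1) → Equiv.Perm (Fin m)) :
    (Nat.card {f : Fin (k+1) → Fin m // ∀ u, σfn u (f u) ≠ f (u + 1)} : ℤ)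
      = ((m:ℤ)-1)^(k+1) + 1 - fixc (wcomp (ext σfn) (k+1)) := by
  have hm0 : (m:ℤ) ≠ 0 := Nat.cast_ne_zero.mpr (by omega)
  obtain ⟨F, hFdef⟩ : ∃ F, F = fixc (wcomp (ext σfn) (k+1)) := ⟨_, rfl⟩
  rw [← hFdef]
  have hFle : F ≤ m := hFdef ▸ fixc_le _
  have hN : Nat.card {f : Fin (k+1) → Fin m // ∀ u, σfn u (f u) ≠ f (u + 1)}
      = F * (AB m (k+1)).1 + (m - F) * (AB m (k+1)).2 := by
    rw [cyclic_card σfn, sum_W_diag hm, hFdef]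
  have hA := (AB_spec hm (k+1)).1
  have hB := (AB_spec hm (k+1)).2
  rw [Odd.neg_one_pow hodd] at hA hB
  apply mul_left_cancel₀ hm0
  rw [hN]
  push_cast [Nat.cast_sub hFle]
  linear_combination (F:ℤ) * hA + ((m:ℤ) - F) * hB

end DPCycle

open DPCycle in
theorem PDP_cycle_odd (n m : ℕ) (hn : 3 ≤ n) (hno : Odd n) (hm : 2 ≤ m) :
    ((cycleMultigraph n).PDP m : ℤ) = ((m : ℤ) - 1) ^ n - ((m : ℤ) - 1) ∧
      ((cycleMultigraph n).PDPdual m : ℤ) = ((m : ℤ) - 1) ^ n + 1 := by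
  obtain ⟨k, rfl⟩ : ∃ k, n = k + 1 := ⟨n - 1, by omega⟩
  obtain ⟨m', rfl⟩ : ∃ m', m = m' + 2 := ⟨m - 2, by omega⟩
  have h3 : 3 ≤ k + 1 := hn
  have hm2 : 2 ≤ m' + 2 := hm
  -- extreme values
  have hpow : (m' + 1 : ℕ) ≤ (m' + 1)^(k+1) := Nat.le_self_pow (by omega) _
  have hlowZ : (((m' + 1)^(k+1) - (m' + 1) : ℕ) : ℤ)
      = (((m' + 2 : ℕ) : ℤ) - 1) ^ (k+1) + 1 - ((m' + 2 : ℕ) : ℤ) := by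
    push_cast [Nat.cast_sub hpow]
    ring
  -- per-cover formula
  have hkey : ∀ c : FullCover (cycleMultigraph (k+1)) (m'+2),
      ∃ F : ℕ, F ≤ m' + 2 ∧
        (c.numColorings : ℤ) = (((m' + 2 : ℕ) : ℤ) - 1) ^ (k+1) + 1 - F := by
    intro c
    refine ⟨fixc (wcomp (DPCycle.ext (fun u : Fin (k+1) => c.perm u (u+1) 0)) (k+1)),
      fixc_le _, ?_⟩
    rw [numColorings_eq h3 c]
    exact Ncyc_formula hm2 hno (fun u => c.perm u (u+1) 0)
  -- realization of every σfn
  have hreal : ∀ σfn : Fin (k+1) → Equiv.Perm (Fin (m'+2)),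
      ∃ c : FullCover (cycleMultigraph (k+1)) (m'+2),
        (c.numColorings : ℤ) = (((m' + 2 : ℕ) : ℤ) - 1) ^ (k+1) + 1
          - fixc (wcomp (ext σfn) (k+1)) := by
    intro σfn
    refine ⟨coverOf h3 σfn, ?_⟩
    rw [numColorings_eq h3]
    have hc : Nat.card {f : Fin (k+1) → Fin (m'+2) //
          ∀ u, (coverOf h3 σfn).perm u (u+1) 0 (f u) ≠ f (u+1)}
        = Nat.card {f : Fin (k+1) → Fin (m'+2) // ∀ u, σfn u (f u) ≠ f (u+1)} :=
      Nat.card_congr (Equiv.subtypeEquivRight (fun f =>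
        forall_congr' (fun u => by rw [coverOf_perm h3 σfn u])))
    rw [hc]
    exact Ncyc_formula hm2 hno σfn
  -- identity cover: F = m'+2
  have hFid : fixc (wcomp (ext (fun _ : Fin (k+1) => (1 : Equiv.Perm (Fin (m'+2))))) (k+1))
      = m' + 2 := by
    have he : ext (fun _ : Fin (k+1) => (1 : Equiv.Perm (Fin (m'+2)))) = fun _ => 1 := by
      funext i; unfold DPCycle.ext; split <;> rfl
    have hw : ∀ j, wcomp (fun _ : ℕ => (1 : Equiv.Perm (Fin (m'+2)))) j = 1 := by
      intro j
      induction j with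
      | zero => rfl
      | succ j ih =>
        show (1 : Equiv.Perm (Fin (m'+2))) * wcomp _ j = 1
        rw [ih, one_mul]
    rw [he, hw]
    simp [fixc]
  -- rotation cover: F = 0
  have hFrot : fixc (wcomp (ext (fun u : Fin (k+1) =>
      if u = 0 then finRotate (m'+2) else 1)) (k+1)) = 0 := by
    have hwr : ∀ j, 1 ≤ j → wcomp (ext (fun u : Fin (k+1) =>
        if u = 0 then finRotate (m'+2) else 1)) j = finRotate (m'+2) := by
      intro j hj
      induction j with
      | zero => omega
      | succ j ih =>
        by_cases hj0 : j = 0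
        · subst hj0
          show DPCycle.ext _ 0 * wcomp _ 0 = _
          have hz : (⟨0, by omega⟩ : Fin (k+1)) = 0 := by
            apply Fin.ext; simp
          have h0 : DPCycle.ext (fun u : Fin (k+1) =>
              if u = 0 then finRotate (m'+2) else 1) 0 = finRotate (m'+2) := by
            unfold DPCycle.ext
            rw [dif_pos (by omega : (0:ℕ) < k+1)]
            simp [hz]
          rw [h0]
          show finRotate (m'+2) * 1 = finRotate (m'+2)
          rw [mul_one]
        · have h1 : DPCycle.ext (fun u : Fin (k+1) =>
              if u = 0 then finRotate (m'+2) else 1) j = 1 := by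
            unfold DPCycle.ext
            split
            · rename_i hlt
              have hne : (⟨j, hlt⟩ : Fin (k+1)) ≠ 0 := by
                intro he
                apply hj0
                simpa using congrArg Fin.val he
              simp [hne]
            · rfl
          show DPCycle.ext _ j * wcomp _ j = _
          rw [h1, one_mul, ih (by omega)]
    rw [hwr (k+1) (by omega)]
    have hnofix : ∀ x : Fin (m'+2), ¬ (finRotate (m'+2) x = x) := by
      intro x h
      rw [finRotate_succ_apply] at h
      have h2 := add_eq_left.mp h
      simp [Fin.ext_iff] at h2
    show (Finset.univ.filter _).card = 0
    rw [Finset.filter_false_of_mem (fun x _ => hnofix x), Finset.card_empty]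
  -- membership of extremes
  have hlow_mem : ((m' + 1)^(k+1) - (m' + 1) : ℕ)
      ∈ {q | ∃ c : FullCover (cycleMultigraph (k+1)) (m'+2), q = c.numColorings} := by
    obtain ⟨c, hc⟩ := hreal (fun _ => 1)
    rw [hFid] at hc
    refine ⟨c, ?_⟩
    have : (((m' + 1)^(k+1) - (m' + 1) : ℕ) : ℤ) = (c.numColorings : ℤ) := by
      rw [hc, hlowZ]
    exact_mod_cast this
  have hhigh_mem : ((m' + 1)^(k+1) + 1 : ℕ)
      ∈ {q | ∃ c : FullCover (cycleMultigraph (k+1)) (m'+2), q = c.numColorings} := by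
    obtain ⟨c, hc⟩ := hreal (fun u => if u = 0 then finRotate (m'+2) else 1)
    rw [hFrot] at hc
    refine ⟨c, ?_⟩
    have : (((m' + 1)^(k+1) + 1 : ℕ) : ℤ) = (c.numColorings : ℤ) := by
      rw [hc]
      push_cast
      ring
    exact_mod_cast this
  -- bounds
  have hbound : ∀ q ∈ {q | ∃ c : FullCover (cycleMultigraph (k+1)) (m'+2),
      q = c.numColorings},
      ((m' + 1)^(k+1) - (m' + 1) : ℕ) ≤ q ∧ q ≤ ((m' + 1)^(k+1) + 1 : ℕ) := by
    rintro q ⟨c, rfl⟩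
    obtain ⟨F, hFle, hc⟩ := hkey c
    have hcast : (F : ℤ) ≤ ((m' + 2 : ℕ) : ℤ) := by exact_mod_cast hFle
    have hF0 : (0 : ℤ) ≤ (F : ℤ) := by positivity
    constructor
    · have : (((m' + 1)^(k+1) - (m' + 1) : ℕ) : ℤ) ≤ (c.numColorings : ℤ) := by
        rw [hc, hlowZ]
        linarith
      exact_mod_cast this
    · have : (c.numColorings : ℤ) ≤ (((m' + 1)^(k+1) + 1 : ℕ) : ℤ) := by
        rw [hc]
        push_cast
        have hxx : ((m':ℤ) + 2 - 1)^(k+1) = ((m':ℤ) + 1)^(k+1) := by ring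
        rw [hxx]
        linarith
      exact_mod_cast this
  constructor
  · have hPDP : (cycleMultigraph (k+1)).PDP (m'+2) = ((m' + 1)^(k+1) - (m' + 1) : ℕ) := by
      apply le_antisymm
      · exact Nat.sInf_le hlow_mem
      · exact le_csInf ⟨_, hlow_mem⟩ (fun q hq => (hbound q hq).1)
    rw [hPDP]
    rw [hlowZ]
    push_cast
    ring
  · have hPDPd : (cycleMultigraph (k+1)).PDPdual (m'+2) = ((m' + 1)^(k+1) + 1 : ℕ) := by
      apply le_antisymm
      · exact csSup_le ⟨_, hhigh_mem⟩ (fun q hq => (hbound q hq).2)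
      · exact le_csSup ⟨((m' + 1)^(k+1) + 1 : ℕ), fun q hq => (hbound q hq).2⟩ hhigh_mem
    rw [hPDPd]
    push_cast
    ring
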